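/- arXiv:1109.5455 — 8 statements merged into one kernel-verified Lean document; each statement's English description precedes it below -/
import Mathlib

section
/- Let A ∈ ℂ^{n×n}, σ ∈ ℂ not an eigenvalue of A, B = (A-σI)^{-1}, and y a unit vector with y^H B y ≠ 0. If u_J satisfies u_J ⟂ y and (I - yy^H)(A - σI)(I - yy^H) u_J = -(Ay - νy), then u_J = γ B y - y with γ = 1/(y^H B y). -/
local notation "⟪" x ", " y "⟫" => @inner ℂ _ _ x y

/-- If `u_J ⟂ y` solves the Jacobi–Davidson correction equation
`(I - yyᴴ)(A - σI)(I - yyᴴ) u_J = -(Ay - νy)`, then `u_J = γ • By - y`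
with `γ = 1/(yᴴ B y)`. -/
theorem jd_exact_solution {E : Type*} [NormedAddCommGroup E] [InnerProductSpace ℂ E]
    (A B : E →L[ℂ] E) (σ ν : ℂ)
    (hBA : B * (A - σ • 1) = 1) (hAB : (A - σ • 1) * B = 1)
    (y : E) (hy : ‖y‖ = 1)
    (hyBy : ⟪y, B y⟫ ≠ 0)
    (uJ : E) (horth : ⟪y, uJ⟫ = 0)
    (heq : (A - σ • 1) (uJ - ⟪y, uJ⟫ • y)
            - ⟪y, (A - σ • 1) (uJ - ⟪y, uJ⟫ • y)⟫ • y
          = -(A y - ν • y)) :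
    uJ = (⟪y, B y⟫)⁻¹ • B y - y := by
  rw [horth, zero_smul, sub_zero] at heq
  set c : ℂ := ⟪y, (A - σ • 1) uJ⟫ - σ + ν with hc
  have h1 : (A - σ • 1) (uJ + y) = c • y := by
    rw [sub_eq_iff_eq_add] at heq
    rw [map_add, heq, hc]
    simp only [ContinuousLinearMap.sub_apply, ContinuousLinearMap.smul_apply,
      ContinuousLinearMap.one_apply]
    module
  have h3 : uJ + y = c • B y := by
    have h2 := congrArg B h1
    rwa [map_smul, ← ContinuousLinearMap.mul_apply, hBA,
      ContinuousLinearMap.one_apply] at h2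
  have h4 : c * ⟪y, B y⟫ = 1 := by
    have h5 := congrArg (fun v => (⟪y, v⟫ : ℂ)) h3
    simp only [inner_add_right, inner_smul_right, horth, zero_add] at h5
    rw [inner_self_eq_norm_sq_to_K, hy] at h5
    simpa using h5.symm
  have hcval : c = (⟪y, B y⟫)⁻¹ := eq_inv_of_mul_eq_one_left h4
  rw [← hcval, ← h3]
  abel
end

section
/- With the hypotheses of the two previous results (u_S = (σ-ν)By + y, u_J = γBy - y, γ = 1/(y^H B y), y ∈ 𝒱, σ ≠ ν), the projections of u_S and u_J onto the orthogonal complement of a subspace 𝒱 containing y are proportional: (I - P_V) B y = (1/(σ-ν)) (I - P_V) u_S = (1/γ) (I - P_V) u_J, where P_V is the orthogonal projector onto 𝒱. Consequently span(𝒱 ∪ {u_S}) = span(𝒱 ∪ {u_J}) whenever (I - P_V) B y ≠ 0. -/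
local notation "⟪" x ", " y "⟫" => @inner ℂ _ _ x y

private lemma span_shift {E : Type*} [NormedAddCommGroup E] [Module ℂ E]
    (K : Submodule ℂ E) (v k : E) (c : ℂ) (hc : c ≠ 0) (hk : k ∈ K) :
    K ⊔ Submodule.span ℂ {c • v + k} = K ⊔ Submodule.span ℂ {v} := by
  apply le_antisymm
  · apply sup_le le_sup_left
    rw [Submodule.span_le, Set.singleton_subset_iff]
    exact add_mem (Submodule.mem_sup_right
      (Submodule.smul_mem _ _ (Submodule.mem_span_singleton_self v)))
      (Submodule.mem_sup_left hk)
  · apply sup_le le_sup_left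
    rw [Submodule.span_le, Set.singleton_subset_iff]
    have hmem : c⁻¹ • ((c • v + k) - k) ∈ K ⊔ Submodule.span ℂ {c • v + k} :=
      Submodule.smul_mem _ _ (sub_mem
        (Submodule.mem_sup_right (Submodule.mem_span_singleton_self _))
        (Submodule.mem_sup_left hk))
    simpa [add_sub_cancel_right, smul_smul, inv_mul_cancel₀ hc] using hmem

/-- the projections of `u_S` and `u_J` onto the orthogonal complement of a
subspace `𝒱 ∋ y` are proportional:
`(I - P_V) B y = (1/(σ-ν)) (I - P_V) u_S = (1/γ) (I - P_V) u_J` with `γ = 1/(yᴴBy)`;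
consequently `span(𝒱 ∪ {u_S}) = span(𝒱 ∪ {u_J})` whenever `(I - P_V) B y ≠ 0`. -/
theorem sira_jd_same_expansion {E : Type*} [NormedAddCommGroup E] [InnerProductSpace ℂ E]
    [FiniteDimensional ℂ E]
    (A B : E →L[ℂ] E) (σ ν : ℂ)
    (hBA : B * (A - σ • 1) = 1) (hAB : (A - σ • 1) * B = 1)
    (hσν : σ ≠ ν)
    (K : Submodule ℂ E) (y : E) (hyK : y ∈ K) (hy : ‖y‖ = 1)
    (hyBy : ⟪y, B y⟫ ≠ 0)
    (uS uJ : E)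
    (huS : uS = (σ - ν) • B y + y)
    (huJ : uJ = (⟪y, B y⟫)⁻¹ • B y - y) :
    (B y - (Submodule.orthogonalProjectionOnto K (B y) : E)
        = (σ - ν)⁻¹ • (uS - (Submodule.orthogonalProjectionOnto K uS : E))
      ∧ B y - (Submodule.orthogonalProjectionOnto K (B y) : E)
        = ⟪y, B y⟫ • (uJ - (Submodule.orthogonalProjectionOnto K uJ : E)))
    ∧ (B y - (Submodule.orthogonalProjectionOnto K (B y) : E) ≠ 0 →
        K ⊔ Submodule.span ℂ {uS} = K ⊔ Submodule.span ℂ {uJ}) := by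
  have hσν' : σ - ν ≠ 0 := sub_ne_zero.mpr hσν
  have hPy : (Submodule.orthogonalProjectionOnto K y : E) = y := by
    exact Submodule.starProjection_eq_self_iff.mpr hyK
  have hPS : (Submodule.orthogonalProjectionOnto K uS : E)
      = (σ - ν) • (Submodule.orthogonalProjectionOnto K (B y) : E) + y := by
    simp [huS, map_add, map_smul, hPy]
  have hPJ : (Submodule.orthogonalProjectionOnto K uJ : E)
      = (⟪y, B y⟫)⁻¹ • (Submodule.orthogonalProjectionOnto K (B y) : E) - y := by
    simp [huJ, map_sub, map_smul, hPy]
  refine ⟨⟨?_, ?_⟩, ?_⟩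
  · rw [hPS, huS, smul_sub, ← smul_sub]
    rw [add_sub_add_right_eq_sub, ← smul_sub, smul_smul, inv_mul_cancel₀ hσν', one_smul]
  · rw [hPJ, huJ, sub_sub_sub_cancel_right, ← smul_sub, smul_smul,
      mul_inv_cancel₀ hyBy, one_smul]
  · intro _
    have h1 : K ⊔ Submodule.span ℂ {uS} = K ⊔ Submodule.span ℂ {B y} := by
      rw [huS]; exact span_shift K (B y) y (σ - ν) hσν' hyK
    have huJ' : uJ = (⟪y, B y⟫)⁻¹ • B y + (-y) := by rw [huJ]; abel
    have h2 : K ⊔ Submodule.span ℂ {uJ} = K ⊔ Submodule.span ℂ {B y} := by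
      rw [huJ']; exact span_shift K (B y) (-y) (⟪y, B y⟫)⁻¹ (inv_ne_zero hyBy) (neg_mem hyK)
    rw [h1, h2]
end

section
/- Let u, ũ ∈ ℂ^n with u ≠ 0, ε = ‖ũ - u‖/‖u‖, and write ũ = u + ε‖u‖f with ‖f‖ = 1 (when ũ ≠ u). Let P_V be an orthogonal projector and set f_⊥ = (I - P_V)f. If (I - P_V)u ≠ 0 and (I - P_V)ũ ≠ 0, and ṽ = (I - P_V)ũ/‖(I - P_V)ũ‖, v = (I - P_V)u/‖(I - P_V)u‖, and ε̃ = ‖(I-P_V)ũ - (I-P_V)u‖/‖(I-P_V)u‖, then sin∠(ṽ, v) = ε̃ · sin∠(ṽ, f_⊥), where for nonzero vectors a, b, sin∠(a,b) = ‖(I - bb^H/‖b‖²) a‖/‖a‖. -/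
local notation "⟪" x ", " y "⟫" => @inner ℂ _ _ x y

/-- `sin∠(a, b) = ‖(I - bbᴴ/‖b‖²) a‖ / ‖a‖` for vectors `a, b`. -/
noncomputable def sinAngle {E : Type*} [NormedAddCommGroup E] [InnerProductSpace ℂ E]
    (a b : E) : ℝ :=
  ‖a - (⟪b, a⟫ / ((‖b‖ : ℂ) ^ 2)) • b‖ / ‖a‖

section Aux

variable {E : Type*} [NormedAddCommGroup E] [InnerProductSpace ℂ E]

lemma sinAngle_smul_left (a b : E) (c : ℝ) (hc : c ≠ 0) :
    sinAngle (c • a) b = sinAngle a b := by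
  unfold sinAngle
  rw [← Complex.coe_smul, inner_smul_right, mul_div_assoc, mul_smul,
    ← smul_sub, norm_smul, norm_smul]
  rw [mul_div_mul_left _ _ (by simpa using hc : ‖(c:ℂ)‖ ≠ 0)]

lemma sinAngle_smul_right (a b : E) (c : ℝ) (hc : c ≠ 0) :
    sinAngle a (c • b) = sinAngle a b := by
  unfold sinAngle
  rw [← Complex.coe_smul, inner_smul_left, norm_smul, smul_smul]
  simp only [Complex.conj_ofReal, Complex.norm_real, Real.norm_eq_abs]
  have hc' : (c : ℂ) ≠ 0 := by simpa using hc
  have h2 : (((|c| * ‖b‖ : ℝ)) : ℂ)^2 = (c:ℂ)^2 * (‖b‖:ℂ)^2 := by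
    push_cast
    rw [mul_pow]
    norm_cast
    rw [sq_abs]
  rw [h2]
  have hsc : (c:ℂ) * ⟪b, a⟫ / ((c:ℂ)^2 * (‖b‖:ℂ)^2) * (c:ℂ)
      = ((c:ℂ)^2 * ⟪b, a⟫) / ((c:ℂ)^2 * (‖b‖:ℂ)^2) := by ring
  rw [hsc, mul_div_mul_left _ _ (pow_ne_zero 2 hc')]

lemma norm_perp_sq (a b : E) (hb : b ≠ 0) :
    ‖a - (⟪b, a⟫ / ((‖b‖ : ℂ) ^ 2)) • b‖ ^ 2 = ‖a‖ ^ 2 - ‖⟪b, a⟫‖ ^ 2 / ‖b‖ ^ 2 := by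
  have hB : ‖b‖ ≠ 0 := norm_ne_zero_iff.mpr hb
  set s : ℂ := ⟪b, a⟫ with hs
  rw [@norm_sub_sq ℂ]
  have h1 : ⟪a, (s / ((‖b‖:ℂ)^2)) • b⟫ = (s / ((‖b‖:ℂ)^2)) * ⟪a, b⟫ := inner_smul_right _ _ _
  have h2 : ⟪a, b⟫ = (starRingEnd ℂ) s := by rw [hs, ← inner_conj_symm]
  rw [h1, h2]
  have h3 : (s / ((‖b‖:ℂ)^2)) * (starRingEnd ℂ) s = ((‖s‖^2 / ‖b‖^2 : ℝ) : ℂ) := by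
    rw [div_mul_eq_mul_div, Complex.mul_conj]
    push_cast
    rw [Complex.normSq_eq_norm_sq]
    norm_num
  rw [h3]
  have h4 : ‖(s / ((‖b‖:ℂ)^2)) • b‖ ^ 2 = ‖s‖^2 / ‖b‖^2 := by
    rw [norm_smul, norm_div]
    simp only [norm_pow, Complex.norm_real, Real.norm_eq_abs, abs_norm]
    field_simp
  rw [h4]
  have h5 : ∀ x : ℝ, RCLike.re ((x:ℝ) : ℂ) = x := fun x => by
    simp [RCLike.re_to_complex]
  rw [h5]
  ring

lemma habs_aux (z : ℂ) : ‖z‖^2 = z.re^2 + z.im^2 := by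
  rw [Complex.sq_norm, Complex.normSq_apply]; ring

lemma sinAngle_core (a b : E) (ha : a ≠ 0) (hb : b ≠ 0) (hab : a ≠ b) :
    sinAngle a b = (‖a - b‖ / ‖b‖) * sinAngle a (a - b) := by
  have hA : (0:ℝ) < ‖a‖ := norm_pos_iff.mpr ha
  have hB : (0:ℝ) < ‖b‖ := norm_pos_iff.mpr hb
  have hD : (0:ℝ) < ‖a - b‖ := norm_pos_iff.mpr (sub_ne_zero.mpr hab)
  have hL0 : 0 ≤ sinAngle a b := div_nonneg (norm_nonneg _) (norm_nonneg _)
  have hR0 : 0 ≤ (‖a - b‖ / ‖b‖) * sinAngle a (a - b) :=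
    mul_nonneg (div_nonneg hD.le hB.le) (div_nonneg (norm_nonneg _) (norm_nonneg _))
  have hsq : (sinAngle a b)^2 = ((‖a - b‖ / ‖b‖) * sinAngle a (a - b))^2 := by
    unfold sinAngle
    rw [mul_pow, div_pow, div_pow, div_pow, norm_perp_sq a b hb,
      norm_perp_sq a (a - b) (sub_ne_zero.mpr hab)]
    have ht : ⟪a - b, a⟫ = ((‖a‖:ℂ)^2) - ⟪b, a⟫ := by
      rw [inner_sub_left, inner_self_eq_norm_sq_to_K]
      norm_cast
    have hr : ‖(((‖a‖:ℂ)^2) - ⟪b, a⟫ : ℂ)‖^2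
        = ‖a‖^4 - 2 * ‖a‖^2 * (⟪b, a⟫ : ℂ).re + ‖⟪b, a⟫‖^2 := by
      rw [habs_aux, habs_aux]
      simp only [Complex.sub_re, Complex.sub_im, pow_two, Complex.mul_re, Complex.mul_im,
        Complex.ofReal_re, Complex.ofReal_im]
      ring
    rw [ht, hr]
    have hDsq : ‖a - b‖^2 = ‖a‖^2 - 2 * (⟪b, a⟫ : ℂ).re + ‖b‖^2 := by
      rw [@norm_sub_sq ℂ, inner_re_symm]
      rfl
    set r := (⟪b, a⟫ : ℂ).re
    set m := ‖(⟪b, a⟫ : ℂ)‖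
    field_simp
    linear_combination (-(‖a‖^2)) * hDsq
  nlinarith [hsq, hL0, hR0]

lemma sinAngle_self (x : E) (hx : x ≠ 0) : sinAngle x x = 0 := by
  unfold sinAngle
  have : ⟪x, x⟫ / ((‖x‖:ℂ)^2) = 1 := by
    rw [inner_self_eq_norm_sq_to_K]
    have : ((‖x‖:ℂ))^2 ≠ 0 := pow_ne_zero 2 (by simpa using norm_ne_zero_iff.mpr hx)
    exact div_self this
  rw [this, one_smul, sub_self, norm_zero, zero_div]

end Aux

/-- Lemma 1: `sin∠(ṽ, v) = ε̃ · sin∠(ṽ, f_⊥)`. -/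
theorem sin_tv_v_eq_teps_sin_tv_fperp {E : Type*} [NormedAddCommGroup E]
    [InnerProductSpace ℂ E] [FiniteDimensional ℂ E]
    (K : Submodule ℂ E) (u ut f : E) (hu : u ≠ 0) (hne : ut ≠ u)
    (hf : f = ‖ut - u‖⁻¹ • (ut - u)) (hfnorm : ‖f‖ = 1)
    (hPu : u - (K.orthogonalProjection u : E) ≠ 0)
    (hPut : ut - (K.orthogonalProjection ut : E) ≠ 0)
    (ε εt : ℝ)
    (hε : ε = ‖ut - u‖ / ‖u‖)
    (hεt : εt = ‖(ut - (K.orthogonalProjection ut : E))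
                  - (u - (K.orthogonalProjection u : E))‖
                / ‖u - (K.orthogonalProjection u : E)‖)
    (vt v : E)
    (hvt : vt = ‖ut - (K.orthogonalProjection ut : E)‖⁻¹
                  • (ut - (K.orthogonalProjection ut : E)))
    (hv : v = ‖u - (K.orthogonalProjection u : E)‖⁻¹
                  • (u - (K.orthogonalProjection u : E))) :
    sinAngle vt v = εt * sinAngle vt (f - (K.orthogonalProjection f : E)) := by
  have hnA : ‖ut - (K.orthogonalProjection ut : E)‖⁻¹ ≠ 0 :=
    inv_ne_zero (norm_ne_zero_iff.mpr hPut)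
  have hnB : ‖u - (K.orthogonalProjection u : E)‖⁻¹ ≠ 0 :=
    inv_ne_zero (norm_ne_zero_iff.mpr hPu)
  have hd : ut - u ≠ 0 := sub_ne_zero.mpr hne
  have hnd : ‖ut - u‖⁻¹ ≠ 0 := inv_ne_zero (norm_ne_zero_iff.mpr hd)
  have hproj : ((K.orthogonalProjection (ut - u) : E))
      = (K.orthogonalProjection ut : E) - (K.orthogonalProjection u : E) := by
    rw [map_sub]; rfl
  have hkey : f - (K.orthogonalProjection f : E)
      = ‖ut - u‖⁻¹ • ((ut - (K.orthogonalProjection ut : E))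
          - (u - (K.orthogonalProjection u : E))) := by
    rw [hf, ← Complex.coe_smul, map_smul, Submodule.coe_smul, ← smul_sub, Complex.coe_smul]
    congr 1
    rw [hproj]
    abel
  by_cases hab : (ut - (K.orthogonalProjection ut : E)) = (u - (K.orthogonalProjection u : E))
  · rw [hvt, hv, hεt, hab, sub_self, norm_zero, zero_div, zero_mul,
      sinAngle_smul_left _ _ _ hnB, sinAngle_smul_right _ _ _ hnB, sinAngle_self _ hPu]
  · rw [hvt, hv, hεt, hkey]
    rw [sinAngle_smul_left _ _ _ hnA, sinAngle_smul_right _ _ _ hnB,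
      sinAngle_smul_left _ _ _ hnA, sinAngle_smul_right _ _ _ hnd]
    exact sinAngle_core _ _ hPut hPu hab
end

section
/- Under the hypotheses of the previous identity together with the eigenpair decomposition bound ‖(I - P_V) B y‖ ≤ 2‖B‖ sin∠(y, x), the relative error ε of the approximate solution satisfies ε ≤ [2 ‖B‖ sin∠(y, x) / (‖B y - α y‖ · sin∠(𝒱, f))] · ε̃. -/
local notation "⟪" x ", " y "⟫" => @inner ℂ _ _ x y

/-- Auxiliary: the orthogonal complement part of a vector has smaller norm. -/
lemma norm_sub_proj_le' {E : Type*} [NormedAddCommGroup E] [InnerProductSpace ℂ E]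
    [FiniteDimensional ℂ E] (K : Submodule ℂ E) (v : E) :
    ‖v - (Submodule.orthogonalProjectionOnto K v : E)‖ ≤ ‖v‖ := by
  have hmem : v - (Submodule.orthogonalProjectionOnto K v : E) ∈ Kᗮ :=
    K.sub_starProjection_mem_orthogonal v
  have hinner : ⟪(Submodule.orthogonalProjectionOnto K v : E), v - (Submodule.orthogonalProjectionOnto K v : E)⟫ = 0 :=
    hmem _ (Submodule.orthogonalProjectionOnto K v).2
  have hsq := norm_add_sq_eq_norm_sq_add_norm_sq_of_inner_eq_zero
    (Submodule.orthogonalProjectionOnto K v : E) (v - (Submodule.orthogonalProjectionOnto K v : E)) hinner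
  rw [add_sub_cancel] at hsq
  nlinarith [norm_nonneg (v - (Submodule.orthogonalProjectionOnto K v : E)), norm_nonneg v,
    norm_nonneg (Submodule.orthogonalProjectionOnto K v : E)]

/-- Theorem 2: `ε ≤ [2‖B‖ sin∠(y,x) / (‖By - αy‖ · sin∠(𝒱,f))] · ε̃`. -/
theorem eps_le_teps_bound {E : Type*} [NormedAddCommGroup E] [InnerProductSpace ℂ E]
    [FiniteDimensional ℂ E]
    (B : E →L[ℂ] E) (lam σ : ℂ) (hlam : lam ≠ σ)
    (x : E) (hx : ‖x‖ = 1) (hBx : B x = (lam - σ)⁻¹ • x)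
    (hB : 1 / ‖lam - σ‖ ≤ ‖B‖)
    (K : Submodule ℂ E)
    (y g : E) (hyK : y ∈ K) (hy : ‖y‖ = 1) (hg : ‖g‖ = 1) (hxg : ⟪x, g⟫ = 0)
    (c : ℂ) (s : ℝ) (hs : 0 ≤ s) (hc : ‖c‖ ≤ 1)
    (hdecomp : y = c • x + (s : ℂ) • g)
    (hsV : ‖x - (Submodule.orthogonalProjectionOnto K x : E)‖ ≤ s)
    (a1 a2 : ℂ) (ha1 : a1 ≠ 0)
    (u ut f : E) (hu : u = a1 • B y + a2 • y) (hune : u ≠ 0)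
    (hPu : u - (Submodule.orthogonalProjectionOnto K u : E) ≠ 0)
    (hBy : B y - (-(a2 / a1)) • y ≠ 0)
    (hne : ut ≠ u) (hf : f = ‖ut - u‖⁻¹ • (ut - u))
    (hfperp : ‖f - (Submodule.orthogonalProjectionOnto K f : E)‖ ≠ 0)
    (ε εt : ℝ)
    (hε : ε = ‖ut - u‖ / ‖u‖)
    (hεt : εt = ‖(ut - u) - (Submodule.orthogonalProjectionOnto K (ut - u) : E)‖
                / ‖u - (Submodule.orthogonalProjectionOnto K u : E)‖) :
    ε ≤ 2 * ‖B‖ * s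
        / (‖B y - (-(a2 / a1)) • y‖ * ‖f - (Submodule.orthogonalProjectionOnto K f : E)‖) * εt := by
  classical
  -- the "complement projection" as a continuous linear map
  set Q : E →L[ℂ] E :=
    ContinuousLinearMap.id ℂ E - K.subtypeL.comp (Submodule.orthogonalProjectionOnto K) with hQdef
  have hQ : ∀ v : E, Q v = v - (Submodule.orthogonalProjectionOnto K v : E) := fun v => rfl
  have hQle : ∀ v : E, ‖Q v‖ ≤ ‖v‖ := by
    intro v; rw [hQ]; exact norm_sub_proj_le' K v
  -- Q y = 0
  have hQy : Q y = 0 := by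
    rw [hQ, show (Submodule.orthogonalProjectionOnto K y : E) = y from K.starProjection_eq_self_iff.mpr hyK, sub_self]
  -- r = ‖ut - u‖ > 0
  set r : ℝ := ‖ut - u‖ with hr
  have hrpos : 0 < r := by
    simpa [hr, sub_ne_zero] using hne
  -- ‖Q (ut - u)‖ = r * ‖Q f‖
  have hQd : Q (ut - u) = r • Q f := by
    have : ut - u = r • f := by
      rw [hf, smul_smul, mul_inv_cancel₀ hrpos.ne', one_smul]
    rw [this, Q.map_smul_of_tower]
  have hQdnorm : ‖Q (ut - u)‖ = r * ‖Q f‖ := by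
    rw [hQd, norm_smul, Real.norm_eq_abs, abs_of_pos hrpos]
  -- u = a1 • (B y - α y)
  have hα : u = a1 • (B y - (-(a2 / a1)) • y) := by
    have h : a1 * -(a2 / a1) = -a2 := by field_simp
    rw [hu, smul_sub, smul_smul, h, neg_smul, sub_neg_eq_add]
  have hunorm : ‖u‖ = ‖a1‖ * ‖B y - (-(a2 / a1)) • y‖ := by
    rw [hα, norm_smul]
  -- Q u = a1 • Q (B y)
  have hQu : Q u = a1 • Q (B y) := by
    rw [hu, map_add, map_smul, map_smul, hQy, smul_zero, add_zero]
  have hQunorm : ‖Q u‖ = ‖a1‖ * ‖Q (B y)‖ := by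
    rw [hQu, norm_smul]
  -- positivity facts
  have ha1pos : 0 < ‖a1‖ := by
    simpa [AbsoluteValue.pos_iff] using ha1
  have hQupos : 0 < ‖Q u‖ := by
    rw [hQ]; exact norm_pos_iff.mpr hPu
  have hQBypos : 0 < ‖Q (B y)‖ := by
    by_contra h
    push_neg at h
    have : ‖Q (B y)‖ = 0 := le_antisymm h (norm_nonneg _)
    rw [hQunorm, this, mul_zero] at hQupos
    exact lt_irrefl 0 hQupos
  have hQfpos : 0 < ‖Q f‖ := by
    rw [hQ]; exact (norm_nonneg _).lt_of_ne' (by rw [← hQ]; rw [hQ]; exact hfperp)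
  have hupos : 0 < ‖u‖ := norm_pos_iff.mpr hune
  have hBypos : 0 < ‖B y - (-(a2 / a1)) • y‖ := norm_pos_iff.mpr hBy
  -- key bound: ‖Q (B y)‖ ≤ 2 ‖B‖ s
  have hkey : ‖Q (B y)‖ ≤ 2 * ‖B‖ * s := by
    have hBy' : B y = (c * (lam - σ)⁻¹) • x + (s : ℂ) • B g := by
      rw [hdecomp, map_add, map_smul, map_smul, hBx, smul_smul]
    have h1 : Q (B y) = (c * (lam - σ)⁻¹) • Q x + (s : ℂ) • Q (B g) := by
      rw [hBy', map_add, map_smul, map_smul]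
    have hBnorm : ‖(lam - σ)⁻¹‖ ≤ ‖B‖ := by
      rw [norm_inv]
      calc ‖lam - σ‖⁻¹ = 1 / ‖lam - σ‖ := (one_div _).symm
        _ ≤ ‖B‖ := hB
    have hQx : ‖Q x‖ ≤ s := by rw [hQ]; exact hsV
    have hQBg : ‖Q (B g)‖ ≤ ‖B‖ := by
      calc ‖Q (B g)‖ ≤ ‖B g‖ := hQle _
        _ ≤ ‖B‖ * ‖g‖ := B.le_opNorm g
        _ = ‖B‖ := by rw [hg, mul_one]
    have hBnn : 0 ≤ ‖B‖ := norm_nonneg _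
    calc ‖Q (B y)‖ ≤ ‖(c * (lam - σ)⁻¹) • Q x‖ + ‖(s : ℂ) • Q (B g)‖ := by
          rw [h1]; exact norm_add_le _ _
      _ = ‖c * (lam - σ)⁻¹‖ * ‖Q x‖ + ‖(s : ℂ)‖ * ‖Q (B g)‖ := by
          rw [norm_smul, norm_smul]
      _ ≤ ‖B‖ * s + s * ‖B‖ := by
          have h2 : ‖c * (lam - σ)⁻¹‖ ≤ ‖B‖ := by
            rw [norm_mul]
            calc ‖c‖ * ‖(lam - σ)⁻¹‖
                ≤ 1 * ‖B‖ := by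
                  apply mul_le_mul hc hBnorm (norm_nonneg _) zero_le_one
              _ = ‖B‖ := one_mul _
          have h3 : ‖(s : ℂ)‖ = s := by
            rw [Complex.norm_real, Real.norm_eq_abs, abs_of_nonneg hs]
          rw [h3]
          exact add_le_add (mul_le_mul h2 hQx (norm_nonneg _) hBnn)
            (mul_le_mul_of_nonneg_left hQBg hs)
      _ = 2 * ‖B‖ * s := by ring
  -- put everything together
  rw [hε, hεt, ← hQ, ← hQ, ← hQ, hQdnorm, hunorm, hQunorm]
  rw [div_mul_div_comm, div_le_div_iff₀ (by positivity) (by positivity)]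
  have hprod : (0:ℝ) < r * ‖Q f‖ * ‖a1‖ * ‖B y - (-(a2 / a1)) • y‖ := by positivity
  nlinarith [mul_le_mul_of_nonneg_left hkey hprod.le]
end

section
/- Let B ∈ ℂ^{n×n} with simple eigenpair (μ, x), ‖x‖ = 1, (x, X_⊥) unitary, L = X_⊥^H B X_⊥. Let (α, y) with ‖y‖ = 1 be an approximate eigenpair such that α is not an eigenvalue of L, and define sep(α, L) = ‖(L - αI)^{-1}‖^{-1}. Then sin∠(y, x) ≤ ‖B y - α y‖ / sep(α, L), where sin∠(y,x) = ‖X_⊥^H y‖. -/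
local notation "⟪" x ", " y "⟫" => @inner ℂ _ _ x y

/-- Lemma 2: if `(μ, x)` is a unit eigenpair of `B`, `L` is the compression
of `B` to the orthogonal complement of `x`, and `α` is not an eigenvalue of `L`
(witnessed by a two-sided inverse `M` of `L - αI`, so `sep(α,L) = ‖M‖⁻¹`), then for any
unit vector `y`: `sin∠(y, x) = ‖(I - xxᴴ)y‖ ≤ ‖By - αy‖ / sep(α, L)`. -/
theorem sin_y_x_le_residual_div_sep {E : Type*} [NormedAddCommGroup E]
    [InnerProductSpace ℂ E] [FiniteDimensional ℂ E]
    (B : E →L[ℂ] E) (μ : ℂ) (x : E) (hx : ‖x‖ = 1) (hBx : B x = μ • x)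
    (α : ℂ) (y : E) (hy : ‖y‖ = 1)
    (L M : (Submodule.span ℂ {x})ᗮ →L[ℂ] (Submodule.span ℂ {x})ᗮ)
    (hL : ∀ w : (Submodule.span ℂ {x})ᗮ,
        L w = Submodule.orthogonalProjectionOnto (Submodule.span ℂ {x})ᗮ (B w))
    (hLM : (L - α • 1) * M = 1) (hML : M * (L - α • 1) = 1) :
    ‖y - ⟪x, y⟫ • x‖ ≤ ‖B y - α • y‖ / ‖M‖⁻¹ := by
  have hxK : x ∈ Submodule.span ℂ {x} := Submodule.mem_span_singleton_self x
  have hxKK : x ∈ ((Submodule.span ℂ {x})ᗮ)ᗮ :=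
    (Submodule.span ℂ {x}).le_orthogonal_orthogonal hxK
  set P : E →L[ℂ] (Submodule.span ℂ {x})ᗮ :=
    Submodule.orthogonalProjectionOnto (Submodule.span ℂ {x})ᗮ with hP
  have hyd : ((P y : E)) = y - ⟪x, y⟫ • x := by
    rw [hP, Submodule.orthogonalProjectionOnto_orthogonal, Submodule.coe_mk,
      Submodule.starProjection_unit_singleton ℂ hx y]
  have hPx : P x = 0 :=
    Submodule.orthogonalProjectionOnto_apply_of_mem_orthogonal hxKK
  have hyE : y = ⟪x, y⟫ • x + ((P y : E)) := by rw [hyd]; abel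
  have hPBy : P (B y) = L (P y) := by
    conv_lhs => rw [hyE]
    rw [map_add, map_smul, hBx]
    simp [map_smul, hPx, ← hL (P y)]
  have key : (L - α • 1) (P y) = P (B y - α • y) := by
    rw [map_sub, hPBy, map_smul]
    simp [ContinuousLinearMap.sub_apply, ContinuousLinearMap.smul_apply]
  have hw : P y = M (P (B y - α • y)) := by
    rw [← key, ← ContinuousLinearMap.mul_apply M, hML, ContinuousLinearMap.one_apply]
  have hPle : ‖P (B y - α • y)‖ ≤ ‖B y - α • y‖ := by
    calc ‖P (B y - α • y)‖ ≤ ‖P‖ * ‖B y - α • y‖ := P.le_opNorm _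
      _ ≤ 1 * ‖B y - α • y‖ :=
          mul_le_mul_of_nonneg_right
            (Submodule.orthogonalProjectionOnto_norm_le (Submodule.span ℂ {x})ᗮ) (norm_nonneg _)
      _ = ‖B y - α • y‖ := one_mul _
  calc ‖y - ⟪x, y⟫ • x‖ = ‖(P y : E)‖ := by rw [hyd]
    _ = ‖P y‖ := rfl
    _ = ‖M (P (B y - α • y))‖ := by rw [← hw]
    _ ≤ ‖M‖ * ‖P (B y - α • y)‖ := M.le_opNorm _
    _ ≤ ‖M‖ * ‖B y - α • y‖ := mul_le_mul_of_nonneg_left hPle (norm_nonneg M)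
    _ = ‖B y - α • y‖ / ‖M‖⁻¹ := by rw [div_eq_mul_inv, inv_inv, mul_comm]
end

section
/- With 𝒱, v, 𝒱₊, x, x_⊥ = (I - P_V)x ≠ 0 as above, sin∠(𝒱₊, x) = sin∠(𝒱, x) · sin∠(v, x_⊥), where sin∠(v, x_⊥) = ‖(I - vv^H) x_⊥‖ / ‖x_⊥‖. -/
local notation "⟪" x ", " y "⟫" => @inner ℂ _ _ x y

/-- `sin∠(𝒱₊, x) = sin∠(𝒱, x) · sin∠(v, x_⊥)`, where
`sin∠(v, x_⊥) = ‖(I - vvᴴ)x_⊥‖ / ‖x_⊥‖` and `x_⊥ = (I - P_V)x`. -/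
theorem sin_expanded_eq_sin_mul_sin {E : Type*} [NormedAddCommGroup E]
    [InnerProductSpace ℂ E] [FiniteDimensional ℂ E]
    (K : Submodule ℂ E) (v : E) (hv : ‖v‖ = 1) (hvK : v ∈ Kᗮ)
    (x : E) (hx : ‖x‖ = 1)
    (hxp : x - (Submodule.orthogonalProjection K x : E) ≠ 0) :
    ‖x - (Submodule.orthogonalProjection (K ⊔ Submodule.span ℂ {v}) x : E)‖
      = ‖x - (Submodule.orthogonalProjection K x : E)‖
        * (‖(x - (Submodule.orthogonalProjection K x : E))
              - ⟪v, x - (Submodule.orthogonalProjection K x : E)⟫ • v‖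
           / ‖x - (Submodule.orthogonalProjection K x : E)‖) := by
  set y : E := x - (Submodule.orthogonalProjection K x : E) with hy
  have hyK : y ∈ Kᗮ := Submodule.sub_starProjection_mem_orthogonal x
  have hproj : (Submodule.orthogonalProjection (K ⊔ Submodule.span ℂ {v}) x : E)
      = (Submodule.orthogonalProjection K x : E) + ⟪v, y⟫ • v := by
    apply Submodule.eq_starProjection_of_mem_of_inner_eq_zero
    · exact Submodule.add_mem _
        (Submodule.mem_sup_left (Submodule.orthogonalProjection K x).2)
        (Submodule.mem_sup_right (Submodule.smul_mem _ _
          (Submodule.mem_span_singleton_self v)))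
    · intro w hw
      rcases Submodule.mem_sup.mp hw with ⟨a, ha, b, hb, rfl⟩
      rcases Submodule.mem_span_singleton.mp hb with ⟨c, rfl⟩
      have hres : x - ((Submodule.orthogonalProjection K x : E) + ⟪v, y⟫ • v)
          = y - ⟪v, y⟫ • v := by rw [hy]; abel
      rw [hres, inner_add_right]
      have h1 : ⟪y - ⟪v, y⟫ • v, a⟫ = 0 := by
        rw [inner_eq_zero_symm]
        exact Submodule.sub_mem _ hyK (Submodule.smul_mem _ _ hvK) a ha
      have h2 : ⟪y - ⟪v, y⟫ • v, c • v⟫ = 0 := by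
        rw [inner_smul_right, inner_sub_left, inner_smul_left]
        have : ⟪v, v⟫ = 1 := by
          rw [@inner_self_eq_norm_sq_to_K ℂ, hv]; norm_num
        rw [← inner_conj_symm v y, this]
        ring_nf
        simp
      rw [h1, h2, add_zero]
  have hnorm : x - (Submodule.orthogonalProjection (K ⊔ Submodule.span ℂ {v}) x : E)
      = y - ⟪v, y⟫ • v := by rw [hproj, hy]; abel
  rw [hnorm, mul_div_cancel₀]
  exact norm_ne_zero_iff.mpr hxp
end

section
/- Let v, ṽ be unit vectors with P_V v = P_V ṽ = 0, x a unit vector with x_⊥ = (I-P_V)x ≠ 0, 𝒱₊ = 𝒱 ⊕ span{v}, 𝒱̃₊ = 𝒱 ⊕ span{ṽ}, and assume sin∠(v, x_⊥) ≠ 0. Then sin∠(𝒱̃₊, x) / sin∠(𝒱₊, x) = sin∠(ṽ, x_⊥) / sin∠(v, x_⊥). -/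
local notation "⟪" x ", " y "⟫" => @inner ℂ _ _ x y

lemma proj_sup_span {E : Type*} [NormedAddCommGroup E]
    [InnerProductSpace ℂ E] [FiniteDimensional ℂ E]
    (K : Submodule ℂ E) (w : E) (hw : ‖w‖ = 1) (hwK : w ∈ Kᗮ) (x : E) :
    x - (Submodule.orthogonalProjectionOnto (K ⊔ Submodule.span ℂ {w}) x : E)
      = (x - (Submodule.orthogonalProjectionOnto K x : E))
        - ⟪w, x - (Submodule.orthogonalProjectionOnto K x : E)⟫ • w := by
  set p := (Submodule.orthogonalProjectionOnto K x : E)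
  set xp := x - p with hxp
  have hiw : ⟪w, p⟫ = 0 := by
    rw [inner_eq_zero_symm]
    exact hwK p (Submodule.orthogonalProjectionOnto K x).2
  have hproj : (Submodule.orthogonalProjectionOnto (K ⊔ Submodule.span ℂ {w}) x : E)
      = p + ⟪w, xp⟫ • w := by
    rw [Submodule.coe_orthogonalProjectionOnto_apply]
    apply Submodule.eq_starProjection_of_mem_orthogonal
    · exact Submodule.add_mem_sup (Submodule.orthogonalProjectionOnto K x).2
        (Submodule.smul_mem _ _ (Submodule.mem_span_singleton_self w))
    · rw [← Submodule.inf_orthogonal]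
      constructor
      · have h1 : xp ∈ Kᗮ := Submodule.sub_starProjection_mem_orthogonal x
        have : x - (p + ⟪w, xp⟫ • w) = xp - ⟪w, xp⟫ • w := by
          rw [hxp]; abel
        rw [this]
        exact Submodule.sub_mem _ h1 (Submodule.smul_mem _ _ hwK)
      · rw [SetLike.mem_coe, Submodule.mem_orthogonal]
        intro u hu
        rw [Submodule.mem_span_singleton] at hu
        obtain ⟨c, rfl⟩ := hu
        have hww : ⟪w, w⟫ = 1 := by
          rw [inner_self_eq_norm_sq_to_K, hw]; norm_num
        rw [inner_smul_left]
        simp [inner_sub_right, inner_add_right, inner_smul_right, hww, hxp, hiw, hw]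
  rw [hproj]; rw [hxp]; abel

/-- with `𝒱₊ = 𝒱 ⊕ span{v}` and `𝒱̃₊ = 𝒱 ⊕ span{ṽ}`,
`sin∠(𝒱̃₊, x) / sin∠(𝒱₊, x) = sin∠(ṽ, x_⊥) / sin∠(v, x_⊥)`. -/
theorem sin_ratio_eq {E : Type*} [NormedAddCommGroup E]
    [InnerProductSpace ℂ E] [FiniteDimensional ℂ E]
    (K : Submodule ℂ E) (v vt : E) (hv : ‖v‖ = 1) (hvt : ‖vt‖ = 1)
    (hvK : v ∈ Kᗮ) (hvtK : vt ∈ Kᗮ)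
    (x : E) (hx : ‖x‖ = 1)
    (hxp : x - (Submodule.orthogonalProjectionOnto K x : E) ≠ 0)
    (hsv : ‖(x - (Submodule.orthogonalProjectionOnto K x : E))
              - ⟪v, x - (Submodule.orthogonalProjectionOnto K x : E)⟫ • v‖
           / ‖x - (Submodule.orthogonalProjectionOnto K x : E)‖ ≠ 0) :
    ‖x - (Submodule.orthogonalProjectionOnto (K ⊔ Submodule.span ℂ {vt}) x : E)‖
      / ‖x - (Submodule.orthogonalProjectionOnto (K ⊔ Submodule.span ℂ {v}) x : E)‖
    = (‖(x - (Submodule.orthogonalProjectionOnto K x : E))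
          - ⟪vt, x - (Submodule.orthogonalProjectionOnto K x : E)⟫ • vt‖
        / ‖x - (Submodule.orthogonalProjectionOnto K x : E)‖)
      / (‖(x - (Submodule.orthogonalProjectionOnto K x : E))
          - ⟪v, x - (Submodule.orthogonalProjectionOnto K x : E)⟫ • v‖
        / ‖x - (Submodule.orthogonalProjectionOnto K x : E)‖) := by
  rw [proj_sup_span K v hv hvK x, proj_sup_span K vt hvt hvtK x]
  have hc : ‖x - (Submodule.orthogonalProjectionOnto K x : E)‖ ≠ 0 := norm_ne_zero_iff.mpr hxp
  field_simp
end

section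
/- Let v be the unit vector in the direction of (I - P_V)By (assumed nonzero), where y ∈ 𝒱 is a unit vector with y = cos∠(y,x)x + sin∠(y,x)g, g ⟂ x, ‖g‖ = 1, and Bx = (1/(λ-σ))x, x_⊥ = (I-P_V)x. Then |cos∠(v, x_⊥)| ≤ 2‖B‖ sin∠(y, x) / ‖(I - P_V)By‖, where cos∠(v, x_⊥) = v^H x_⊥ / ‖x_⊥‖ (assuming x_⊥ ≠ 0). -/
local notation "⟪" x ", " y "⟫" => @inner ℂ _ _ x y

lemma norm_sub_orthProj_le {E : Type*} [NormedAddCommGroup E] [InnerProductSpace ℂ E]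
    [FiniteDimensional ℂ E] (K : Submodule ℂ E) (u : E) :
    ‖u - (K.orthogonalProjectionOnto u : E)‖ ≤ ‖u‖ := by
  rw [← Submodule.starProjection_apply, Submodule.starProjection_minimal]
  have : ‖u - ((0 : K) : E)‖ = ‖u‖ := by simp
  exact this ▸ ciInf_le ⟨0, fun r ⟨w, hw⟩ => hw ▸ norm_nonneg _⟩ (0 : K)

/-- with `v` the unit vector in the direction of `(I - P_V)By`,
`|cos∠(v, x_⊥)| ≤ 2‖B‖ sin∠(y, x) / ‖(I - P_V)By‖`. -/
theorem cos_v_xperp_bound {E : Type*} [NormedAddCommGroup E] [InnerProductSpace ℂ E]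
    [FiniteDimensional ℂ E]
    (B : E →L[ℂ] E) (lam σ : ℂ) (hlam : lam ≠ σ)
    (x : E) (hx : ‖x‖ = 1) (hBx : B x = (lam - σ)⁻¹ • x)
    (hB : 1 / ‖lam - σ‖ ≤ ‖B‖)
    (K : Submodule ℂ E)
    (y g : E) (hyK : y ∈ K) (hy : ‖y‖ = 1) (hg : ‖g‖ = 1) (hxg : ⟪x, g⟫ = 0)
    (c : ℂ) (s : ℝ) (hs : 0 ≤ s) (hc : ‖c‖ ≤ 1)
    (hdecomp : y = c • x + (s : ℂ) • g)
    (hxp : x - (K.orthogonalProjectionOnto x : E) ≠ 0)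
    (hsV : ‖x - (K.orthogonalProjectionOnto x : E)‖ ≤ s)
    (hPBy : B y - (K.orthogonalProjectionOnto (B y) : E) ≠ 0)
    (v : E)
    (hv : v = ‖B y - (K.orthogonalProjectionOnto (B y) : E)‖⁻¹
                • (B y - (K.orthogonalProjectionOnto (B y) : E))) :
    ‖⟪v, x - (K.orthogonalProjectionOnto x : E)⟫‖
        / ‖x - (K.orthogonalProjectionOnto x : E)‖
      ≤ 2 * ‖B‖ * s / ‖B y - (K.orthogonalProjectionOnto (B y) : E)‖ := by
  set xp : E := x - (K.orthogonalProjectionOnto x : E) with hxpdef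
  set w : E := B y - (K.orthogonalProjectionOnto (B y) : E) with hwdef
  have hxp0 : 0 < ‖xp‖ := norm_pos_iff.mpr hxp
  have hw0 : 0 < ‖w‖ := norm_pos_iff.mpr hPBy
  have hB0 : 0 ≤ ‖B‖ := norm_nonneg _
  -- decomposition of w
  have hBy : B y = (c * (lam - σ)⁻¹) • x + (s : ℂ) • B g := by
    rw [hdecomp, map_add, map_smul, map_smul, hBx, smul_smul]
  have hwdec : w = (c * (lam - σ)⁻¹) • xp + (s : ℂ) • (B g - (K.orthogonalProjectionOnto (B g) : E)) := by
    rw [hwdef, hxpdef, hBy, map_add, map_smul, map_smul]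
    push_cast
    module
  -- bound on inner product with w
  have hinner : ‖⟪w, xp⟫‖ ≤ 2 * ‖B‖ * s * ‖xp‖ := by
    rw [hwdec]
    rw [inner_add_left, inner_smul_left, inner_smul_left]
    have h1 : ‖(starRingEnd ℂ) (c * (lam - σ)⁻¹) * ⟪xp, xp⟫‖
        ≤ ‖B‖ * s * ‖xp‖ := by
      have habs : ‖⟪xp, xp⟫‖ = ‖xp‖ * ‖xp‖ := by
        rw [inner_self_eq_norm_sq_to_K]
        push_cast
        simp [sq, abs_of_nonneg (norm_nonneg xp)]
      rw [norm_mul, Complex.norm_conj, norm_mul, norm_inv, habs]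
      have hinv : ‖lam - σ‖⁻¹ ≤ ‖B‖ := by
        rwa [one_div] at hB
      calc ‖c‖ * ‖lam - σ‖⁻¹ * (‖xp‖ * ‖xp‖)
          ≤ 1 * ‖B‖ * (s * ‖xp‖) := by
            apply mul_le_mul (mul_le_mul hc hinv (by positivity) zero_le_one)
              (mul_le_mul_of_nonneg_right hsV (norm_nonneg _)) (by positivity)
              (by positivity)
        _ = ‖B‖ * s * ‖xp‖ := by ring
    have h2 : ‖(starRingEnd ℂ) (s : ℂ) *
        ⟪B g - (K.orthogonalProjectionOnto (B g) : E), xp⟫‖ ≤ s * (‖B‖ * ‖xp‖) := by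
      rw [norm_mul, Complex.norm_conj, Complex.norm_real, Real.norm_of_nonneg hs]
      apply mul_le_mul_of_nonneg_left _ hs
      calc ‖⟪B g - (K.orthogonalProjectionOnto (B g) : E), xp⟫‖
          ≤ ‖B g - (K.orthogonalProjectionOnto (B g) : E)‖ * ‖xp‖ := by
            exact norm_inner_le_norm (𝕜 := ℂ) _ xp
        _ ≤ ‖B‖ * ‖xp‖ := by
            apply mul_le_mul_of_nonneg_right _ (norm_nonneg _)
            calc ‖B g - (K.orthogonalProjectionOnto (B g) : E)‖ ≤ ‖B g‖ :=
                  norm_sub_orthProj_le K (B g)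
              _ ≤ ‖B‖ * ‖g‖ := B.le_opNorm g
              _ = ‖B‖ := by rw [hg, mul_one]
      done
    calc ‖_‖ ≤ _ + _ := norm_add_le _ _
      _ ≤ ‖B‖ * s * ‖xp‖ + s * (‖B‖ * ‖xp‖) := add_le_add h1 h2
      _ = 2 * ‖B‖ * s * ‖xp‖ := by ring
  -- inner with v
  have hvinner : ‖⟪v, xp⟫‖ = ‖w‖⁻¹ * ‖⟪w, xp⟫‖ := by
    rw [hv, RCLike.real_smul_eq_coe_smul (K := ℂ), inner_smul_left]
    simp [Complex.norm_real, abs_of_nonneg (inv_nonneg.mpr (norm_nonneg w))]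
  rw [hvinner, div_le_div_iff₀ hxp0 hw0]
  calc ‖w‖⁻¹ * ‖⟪w, xp⟫‖ * ‖w‖ = ‖⟪w, xp⟫‖ := by
        field_simp
    _ ≤ 2 * ‖B‖ * s * ‖xp‖ := hinner
end
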